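/- arXiv:1804.01470 — 8 statements merged into one kernel-verified Lean document; each statement's English description precedes it below -/
import Mathlib

section
/- If functions f, g, h on ℤ² satisfy the three bilinear equations (a₁−a₂)f₁₂g + a₂g₂f₁ − a₁g₁f₂ = 0, (a₁−a₂)g₁₂h + a₂h₂g₁ − a₁h₁g₂ = 0, (a₁−a₂)h₁₂f + a₂f₂h₁ − a₁f₁h₂ = 0 (subscripts denote forward shifts in n₁, n₂), and f, g are nowhere zero, then the functions v = h/f, w = g/f, u = f₁₂f/(f₁f₂) satisfy (a₁−a₂)uw = a₁w₁ − a₂w₂, (a₁−a₂)uw₁₂v = a₁w₂v₁ − a₂w₁v₂, and (a₁−a₂)uv₁₂ = a₁v₂ − a₂v₁. -/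
/-- From the three bilinear equations for f, g, h to the Miura-type system for
    v = h/f, w = g/f, u = f₁₂f/(f₁f₂). -/
theorem stmt0 (f g h v w u : ℤ → ℤ → ℂ) (a₁ a₂ : ℂ)
    (hf : ∀ m n, f m n ≠ 0) (hg : ∀ m n, g m n ≠ 0)
    (hbil1 : ∀ m n, (a₁ - a₂) * f (m+1) (n+1) * g m n
      + a₂ * g m (n+1) * f (m+1) n - a₁ * g (m+1) n * f m (n+1) = 0)
    (hbil2 : ∀ m n, (a₁ - a₂) * g (m+1) (n+1) * h m n
      + a₂ * h m (n+1) * g (m+1) n - a₁ * h (m+1) n * g m (n+1) = 0)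
    (hbil3 : ∀ m n, (a₁ - a₂) * h (m+1) (n+1) * f m n
      + a₂ * f m (n+1) * h (m+1) n - a₁ * f (m+1) n * h m (n+1) = 0)
    (hv : ∀ m n, v m n = h m n / f m n)
    (hw : ∀ m n, w m n = g m n / f m n)
    (hu : ∀ m n, u m n = f (m+1) (n+1) * f m n / (f (m+1) n * f m (n+1))) :
    (∀ m n, (a₁ - a₂) * u m n * w m n = a₁ * w (m+1) n - a₂ * w m (n+1)) ∧
    (∀ m n, (a₁ - a₂) * u m n * w (m+1) (n+1) * v m n
      = a₁ * w m (n+1) * v (m+1) n - a₂ * w (m+1) n * v m (n+1)) ∧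
    (∀ m n, (a₁ - a₂) * u m n * v (m+1) (n+1)
      = a₁ * v m (n+1) - a₂ * v (m+1) n) := by
  refine ⟨fun m n => ?_, fun m n => ?_, fun m n => ?_⟩ <;>
    simp only [hv, hw, hu] <;>
    (have h1 := hf m n; have h2 := hf (m+1) n; have h3 := hf m (n+1);
     have h4 := hf (m+1) (n+1); field_simp)
  · linear_combination hbil1 m n
  · linear_combination hbil2 m n
  · linear_combination hbil3 m n
end

section
/- Suppose v, w : ℤ² → ℂ are nowhere-vanishing and u : ℤ² → ℂ satisfies (a₁−a₂)uw = a₁w₁ − a₂w₂, (a₁−a₂)uw₁₂v = a₁w₂v₁ − a₂w₁v₂, and (a₁−a₂)uv₁₂ = a₁v₂ − a₂v₁, where u is nowhere zero and a₁ ≠ a₂. Then v and w satisfy the two-component discrete modified Boussinesq equation: (a₁w₁ − a₂w₂)·w₁₂v = (a₁w₂v₁ − a₂w₁v₂)·w and (a₁w₂v₁ − a₂w₁v₂)·v₁₂ = (a₁v₂ − a₂v₁)·w₁₂v. -/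
/-- Eliminating u from the Miura-type system yields the two-component discrete
    modified Boussinesq equation. -/
theorem stmt1 (v w u : ℤ → ℤ → ℂ) (a₁ a₂ : ℂ) (ha : a₁ ≠ a₂)
    (hv : ∀ m n, v m n ≠ 0) (hw : ∀ m n, w m n ≠ 0) (hu : ∀ m n, u m n ≠ 0)
    (h1 : ∀ m n, (a₁ - a₂) * u m n * w m n = a₁ * w (m+1) n - a₂ * w m (n+1))
    (h2 : ∀ m n, (a₁ - a₂) * u m n * w (m+1) (n+1) * v m n
      = a₁ * w m (n+1) * v (m+1) n - a₂ * w (m+1) n * v m (n+1))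
    (h3 : ∀ m n, (a₁ - a₂) * u m n * v (m+1) (n+1)
      = a₁ * v m (n+1) - a₂ * v (m+1) n) :
    (∀ m n, (a₁ * w (m+1) n - a₂ * w m (n+1)) * (w (m+1) (n+1) * v m n)
      = (a₁ * w m (n+1) * v (m+1) n - a₂ * w (m+1) n * v m (n+1)) * w m n) ∧
    (∀ m n, (a₁ * w m (n+1) * v (m+1) n - a₂ * w (m+1) n * v m (n+1)) * v (m+1) (n+1)
      = (a₁ * v m (n+1) - a₂ * v (m+1) n) * (w (m+1) (n+1) * v m n)) := by
  constructor <;> intro m n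
  · rw [← h1 m n, ← h2 m n]; ring
  · rw [← h3 m n, ← h2 m n]; ring
end

section
/- Let v, w : ℤ² → ℂ be nowhere-vanishing functions, a₁, a₂, λ constants, and define the 3×3 matrices L = [[a₁w₁/w, λ, 0], [0, a₁(v₁/v)(w/w₁), λ], [λ, 0, a₁v/v₁]] and M = [[a₂w₂/w, λ, 0], [0, a₂(v₂/v)(w/w₂), λ], [λ, 0, a₂v/v₂]]. Then the compatibility condition L₂·M = M₁·L holds (for λ ≠ 0) if and only if v, w satisfy the discrete modified Boussinesq equation (a₁w₁ − a₂w₂)w₁₂v = (a₁w₂v₁ − a₂w₁v₂)w, (a₁w₂v₁ − a₂w₁v₂)v₁₂ = (a₁v₂ − a₂v₁)w₁₂v. -/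
open Matrix

lemma cancelC {a b c : ℂ} (hc : c ≠ 0) (h : (a - b) * c = 0) : a = b :=
  sub_eq_zero.mp ((mul_eq_zero.mp h).resolve_right hc)

lemma keyS (a₁ a₂ v0 v1 v2 v12 w0 w1 w2 w12 : ℂ)
    (hv0 : v0 ≠ 0) (hv1 : v1 ≠ 0) (hv2 : v2 ≠ 0) (hv12 : v12 ≠ 0)
    (hw0 : w0 ≠ 0) (hw1 : w1 ≠ 0) (hw2 : w2 ≠ 0) (hw12 : w12 ≠ 0) :
    (a₁ * w12 / w2 + a₂ * (v2 / v0) * (w0 / w2) = a₂ * w12 / w1 + a₁ * (v1 / v0) * (w0 / w1)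
     ∧ a₁ * (v12 / v2) * (w2 / w12) + a₂ * (v0 / v2) = a₂ * (v12 / v1) * (w1 / w12) + a₁ * (v0 / v1)
     ∧ a₂ * w2 / w0 + a₁ * (v2 / v12) = a₁ * w1 / w0 + a₂ * (v1 / v12))
    ↔ ((a₁ * w1 - a₂ * w2) * (w12 * v0) = (a₁ * w2 * v1 - a₂ * w1 * v2) * w0
       ∧ (a₁ * w2 * v1 - a₂ * w1 * v2) * v12 = (a₁ * v2 - a₂ * v1) * (w12 * v0)) := by
  constructor
  · rintro ⟨h1, h2, _⟩
    field_simp at h1 h2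
    constructor
    · refine cancelC (c := v0 * w1 * w2) (by simp [hv0, hw1, hw2]) ?_
      linear_combination v0 * w1 * w2 * h1
    · refine cancelC (c := v1 * v2 * w12) (by simp [hv1, hv2, hw12]) ?_
      linear_combination v1 * v2 * w12 * h2
  · rintro ⟨h1, h2⟩
    have h4 : (a₁ * w1 - a₂ * w2) * v12 = (a₁ * v2 - a₂ * v1) * w0 := by
      refine cancelC (c := w12 * v0) (by simp [hw12, hv0]) ?_
      linear_combination v12 * h1 + w0 * h2
    refine ⟨?_, ?_, ?_⟩
    · field_simp
      linear_combination h1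
    · field_simp
      linear_combination h2
    · field_simp
      linear_combination -h4

lemma keyM (A B C A' B' C' A1 B1 C1 A2 B2 C2 l : ℂ) (hl : l ≠ 0) :
    (!![A2,l,0;0,B2,l;l,0,C2] * !![A',l,0;0,B',l;l,0,C'] =
     !![A1,l,0;0,B1,l;l,0,C1] * !![A,l,0;0,B,l;l,0,C]) ↔
    (A2*A' = A1*A ∧ B2*B' = B1*B ∧ C2*C' = C1*C ∧
     A2 + B' = A1 + B ∧ B2 + C' = B1 + C ∧ A' + C2 = A + C1) := by
  rw [show (!![A2,l,0;0,B2,l;l,0,C2] * !![A',l,0;0,B',l;l,0,C'] : Matrix (Fin 3) (Fin 3) ℂ) = _ from Matrix.mul_fin_three ..,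
     show (!![A1,l,0;0,B1,l;l,0,C1] * !![A,l,0;0,B,l;l,0,C] : Matrix (Fin 3) (Fin 3) ℂ) = _ from Matrix.mul_fin_three ..]
  rw [← Matrix.ext_iff]
  constructor
  · intro h
    refine ⟨?_, ?_, ?_, ?_, ?_, ?_⟩
    · simpa using h 0 0
    · simpa using h 1 1
    · simpa using h 2 2
    · have := h 0 1; simp at this
      exact mul_left_cancel₀ hl (by linear_combination this)
    · have := h 1 2; simp at this
      exact mul_left_cancel₀ hl (by linear_combination this)
    · have := h 2 0; simp at this
      exact mul_left_cancel₀ hl (by linear_combination this)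
  · rintro ⟨e1,e2,e3,e4,e5,e6⟩ i j
    fin_cases i <;> fin_cases j <;> simp
    · linear_combination e1
    · linear_combination l * e4
    · linear_combination e2
    · linear_combination l * e5
    · linear_combination l * e6
    · linear_combination e3

/-- The compatibility condition L₂·M = M₁·L of the 3×3 Lax pair holds iff
    (v, w) satisfy the discrete modified Boussinesq equation. -/
theorem stmt2 (v w : ℤ → ℤ → ℂ) (a₁ a₂ l : ℂ) (hl : l ≠ 0)
    (hv : ∀ m n, v m n ≠ 0) (hw : ∀ m n, w m n ≠ 0)
    (L M : ℤ → ℤ → Matrix (Fin 3) (Fin 3) ℂ)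
    (hL : ∀ m n, L m n =
      !![a₁ * w (m+1) n / w m n, l, 0;
         0, a₁ * (v (m+1) n / v m n) * (w m n / w (m+1) n), l;
         l, 0, a₁ * (v m n / v (m+1) n)])
    (hM : ∀ m n, M m n =
      !![a₂ * w m (n+1) / w m n, l, 0;
         0, a₂ * (v m (n+1) / v m n) * (w m n / w m (n+1)), l;
         l, 0, a₂ * (v m n / v m (n+1))]) :
    (∀ m n, L m (n+1) * M m n = M (m+1) n * L m n) ↔
    ((∀ m n, (a₁ * w (m+1) n - a₂ * w m (n+1)) * (w (m+1) (n+1) * v m n)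
        = (a₁ * w m (n+1) * v (m+1) n - a₂ * w (m+1) n * v m (n+1)) * w m n) ∧
     (∀ m n, (a₁ * w m (n+1) * v (m+1) n - a₂ * w (m+1) n * v m (n+1)) * v (m+1) (n+1)
        = (a₁ * v m (n+1) - a₂ * v (m+1) n) * (w (m+1) (n+1) * v m n))) := by
  have main : ∀ m n : ℤ, (L m (n+1) * M m n = M (m+1) n * L m n) ↔
      ((a₁ * w (m+1) n - a₂ * w m (n+1)) * (w (m+1) (n+1) * v m n)
        = (a₁ * w m (n+1) * v (m+1) n - a₂ * w (m+1) n * v m (n+1)) * w m n ∧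
       (a₁ * w m (n+1) * v (m+1) n - a₂ * w (m+1) n * v m (n+1)) * v (m+1) (n+1)
        = (a₁ * v m (n+1) - a₂ * v (m+1) n) * (w (m+1) (n+1) * v m n)) := by
    intro m n
    have hks := keyS a₁ a₂ (v m n) (v (m+1) n) (v m (n+1)) (v (m+1) (n+1))
      (w m n) (w (m+1) n) (w m (n+1)) (w (m+1) (n+1))
      (hv m n) (hv (m+1) n) (hv m (n+1)) (hv (m+1) (n+1))
      (hw m n) (hw (m+1) n) (hw m (n+1)) (hw (m+1) (n+1))
    rw [hL m (n+1), hM m n, hM (m+1) n, hL m n,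
      keyM _ _ _ _ _ _ _ _ _ _ _ _ _ hl]
    constructor
    · rintro ⟨_, _, _, h4, h5, h6⟩
      exact hks.mp ⟨h4, h5, h6⟩
    · intro ht
      obtain ⟨h4, h5, h6⟩ := hks.mpr ht
      have n1 := hv m n; have n2 := hv (m+1) n; have n3 := hv m (n+1)
      have n4 := hv (m+1) (n+1); have n5 := hw m n; have n6 := hw (m+1) n
      have n7 := hw m (n+1); have n8 := hw (m+1) (n+1)
      refine ⟨?_, ?_, ?_, h4, h5, h6⟩
      · field_simp
      · field_simp
      · field_simp
  constructor
  · intro h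
    exact ⟨fun m n => ((main m n).mp (h m n)).1, fun m n => ((main m n).mp (h m n)).2⟩
  · rintro ⟨h1, h2⟩ m n
    exact (main m n).mpr ⟨h1 m n, h2 m n⟩
end

section
/- The entrywise difference L₂·M − M₁·L of the Lax matrices of the discrete modified Boussinesq equation equals λ times the matrix with only nonzero entries in positions (1,2), (2,3), (3,1), given respectively by [(a₁w₁ − a₂w₂)w₁₂v − (a₁w₂v₁ − a₂w₁v₂)w]/(w₁w₂v), [(a₁w₂v₁ − a₂w₁v₂)v₁₂ − (a₁v₂ − a₂v₁)w₁₂v]/(w₁₂v₁v₂), and [(a₁v₂ − a₂v₁)w − (a₁w₁ − a₂w₂)v₁₂]/(wv₁₂). -/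
open Matrix
set_option maxHeartbeats 2000000

/-- The explicit form of L₂·M − M₁·L for the Lax matrices of the discrete
    modified Boussinesq equation. -/
theorem stmt3 (v w : ℤ → ℤ → ℂ) (a₁ a₂ l : ℂ)
    (hv : ∀ m n, v m n ≠ 0) (hw : ∀ m n, w m n ≠ 0)
    (L M : ℤ → ℤ → Matrix (Fin 3) (Fin 3) ℂ)
    (hL : ∀ m n, L m n =
      !![a₁ * w (m+1) n / w m n, l, 0;
         0, a₁ * v (m+1) n * w m n / (v m n * w (m+1) n), l;
         l, 0, a₁ * v m n / v (m+1) n])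
    (hM : ∀ m n, M m n =
      !![a₂ * w m (n+1) / w m n, l, 0;
         0, a₂ * v m (n+1) * w m n / (v m n * w m (n+1)), l;
         l, 0, a₂ * v m n / v m (n+1)]) :
    ∀ m n, L m (n+1) * M m n - M (m+1) n * L m n =
      l • !![0,
             ((a₁ * w (m+1) n - a₂ * w m (n+1)) * w (m+1) (n+1) * v m n
               - (a₁ * w m (n+1) * v (m+1) n - a₂ * w (m+1) n * v m (n+1)) * w m n)
               / (w (m+1) n * w m (n+1) * v m n), 0;
             0, 0,
             ((a₁ * w m (n+1) * v (m+1) n - a₂ * w (m+1) n * v m (n+1)) * v (m+1) (n+1)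
               - (a₁ * v m (n+1) - a₂ * v (m+1) n) * w (m+1) (n+1) * v m n)
               / (w (m+1) (n+1) * v (m+1) n * v m (n+1));
             ((a₁ * v m (n+1) - a₂ * v (m+1) n) * w m n
               - (a₁ * w (m+1) n - a₂ * w m (n+1)) * v (m+1) (n+1))
               / (w m n * v (m+1) (n+1)), 0, 0] := by
  intro m n
  rw [hL, hM, hL, hM]
  ext i j
  fin_cases i <;> fin_cases j <;>
    simp [Matrix.mul_apply, Fin.sum_univ_succ, Matrix.smul_apply,
      Matrix.vecHead, Matrix.vecTail] <;>
    field_simp [hv, hw] <;> ring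
end

section
/- Let ω = (−1+√3·i)/2 be a primitive cube root of unity and ω* its complex conjugate. For constants a₁, a₂, λ ∈ ℂ, define φ⁽¹⁾(n₁,n₂,n₃) = λ^{n₃}(a₁+λ)^{n₁}(a₂+λ)^{n₂}, φ⁽²⁾ = (ωλ)^{n₃}(a₁+ωλ)^{n₁}(a₂+ωλ)^{n₂}, φ⁽³⁾ = (ω*λ)^{n₃}(a₁+ω*λ)^{n₁}(a₂+ω*λ)^{n₂}, and set φ = φ⁽¹⁾+φ⁽²⁾+φ⁽³⁾, φ̄ = φ⁽¹⁾+ωφ⁽²⁾+ω*φ⁽³⁾, φ̄̄ = φ⁽¹⁾+ω²φ⁽²⁾+ω*²φ⁽³⁾. Then (φ, φ̄, φ̄̄) satisfies the seed linear system: φ₁ = a₁φ + λφ̄, φ̄₁ = a₁φ̄ + λφ̄̄, φ̄̄₁ = a₁φ̄̄ + λφ, and the analogous equations with a₂ and the shift in n₂. -/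
/-- The discrete exponential eigenfunctions of the seed linear system for the
    constant seed solution (v, w) = (1, 1). -/
theorem stmt7 (a₁ a₂ l : ℂ)
    (ω ωs : ℂ)
    (hω : ω = (-1 + Real.sqrt 3 * Complex.I) / 2)
    (hωs : ωs = (-1 - Real.sqrt 3 * Complex.I) / 2)
    (hl : l ≠ 0)
    (h1 : a₁ + l ≠ 0) (h2 : a₁ + ω * l ≠ 0) (h3 : a₁ + ωs * l ≠ 0)
    (h4 : a₂ + l ≠ 0) (h5 : a₂ + ω * l ≠ 0) (h6 : a₂ + ωs * l ≠ 0)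
    (φ1 φ2 φ3 φ φb φbb : ℤ → ℤ → ℤ → ℂ)
    (hφ1 : ∀ n₁ n₂ n₃, φ1 n₁ n₂ n₃ = l ^ n₃ * (a₁ + l) ^ n₁ * (a₂ + l) ^ n₂)
    (hφ2 : ∀ n₁ n₂ n₃, φ2 n₁ n₂ n₃ = (ω * l) ^ n₃ * (a₁ + ω * l) ^ n₁ * (a₂ + ω * l) ^ n₂)
    (hφ3 : ∀ n₁ n₂ n₃, φ3 n₁ n₂ n₃ = (ωs * l) ^ n₃ * (a₁ + ωs * l) ^ n₁ * (a₂ + ωs * l) ^ n₂)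
    (hφ : ∀ n₁ n₂ n₃, φ n₁ n₂ n₃ = φ1 n₁ n₂ n₃ + φ2 n₁ n₂ n₃ + φ3 n₁ n₂ n₃)
    (hφb : ∀ n₁ n₂ n₃, φb n₁ n₂ n₃ = φ1 n₁ n₂ n₃ + ω * φ2 n₁ n₂ n₃ + ωs * φ3 n₁ n₂ n₃)
    (hφbb : ∀ n₁ n₂ n₃, φbb n₁ n₂ n₃
      = φ1 n₁ n₂ n₃ + ω^2 * φ2 n₁ n₂ n₃ + ωs^2 * φ3 n₁ n₂ n₃) :
    (∀ n₁ n₂ n₃, φ (n₁+1) n₂ n₃ = a₁ * φ n₁ n₂ n₃ + l * φb n₁ n₂ n₃) ∧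
    (∀ n₁ n₂ n₃, φb (n₁+1) n₂ n₃ = a₁ * φb n₁ n₂ n₃ + l * φbb n₁ n₂ n₃) ∧
    (∀ n₁ n₂ n₃, φbb (n₁+1) n₂ n₃ = a₁ * φbb n₁ n₂ n₃ + l * φ n₁ n₂ n₃) ∧
    (∀ n₁ n₂ n₃, φ n₁ (n₂+1) n₃ = a₂ * φ n₁ n₂ n₃ + l * φb n₁ n₂ n₃) ∧
    (∀ n₁ n₂ n₃, φb n₁ (n₂+1) n₃ = a₂ * φb n₁ n₂ n₃ + l * φbb n₁ n₂ n₃) ∧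
    (∀ n₁ n₂ n₃, φbb n₁ (n₂+1) n₃ = a₂ * φbb n₁ n₂ n₃ + l * φ n₁ n₂ n₃) := by
  have hs : ((Real.sqrt 3 : ℝ) : ℂ) ^ 2 = 3 := by
    norm_cast
    rw [Real.sq_sqrt] <;> norm_num
  have hω3 : ω ^ 3 = 1 := by
    rw [hω]
    linear_combination ((3 - (Real.sqrt 3 : ℂ) * Complex.I) / 8) * hs
      + ((-3 * ((Real.sqrt 3:ℝ):ℂ)^2 + ((Real.sqrt 3:ℝ):ℂ)^3 * Complex.I) / 8) * Complex.I_sq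
  have hωs3 : ωs ^ 3 = 1 := by
    rw [hωs]
    linear_combination ((3 + (Real.sqrt 3 : ℂ) * Complex.I) / 8) * hs
      + ((-3 * ((Real.sqrt 3:ℝ):ℂ)^2 - ((Real.sqrt 3:ℝ):ℂ)^3 * Complex.I) / 8) * Complex.I_sq
  refine ⟨?_, ?_, ?_, ?_, ?_, ?_⟩ <;> intro n₁ n₂ n₃ <;>
    simp only [hφ, hφb, hφbb, hφ1, hφ2, hφ3, zpow_add_one₀ h1, zpow_add_one₀ h2,
      zpow_add_one₀ h3, zpow_add_one₀ h4, zpow_add_one₀ h5, zpow_add_one₀ h6]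
  · ring
  · ring
  · linear_combination (l * (ω*l)^n₃ * (a₁+ω*l)^n₁ * (a₂+ω*l)^n₂) * hω3
      + (l * (ωs*l)^n₃ * (a₁+ωs*l)^n₁ * (a₂+ωs*l)^n₂) * hωs3
  · ring
  · ring
  · linear_combination (l * (ω*l)^n₃ * (a₁+ω*l)^n₁ * (a₂+ω*l)^n₂) * hω3
      + (l * (ωs*l)^n₃ * (a₁+ωs*l)^n₁ * (a₂+ωs*l)^n₂) * hωs3
end

section
/- With φ, φ̄, φ̄̄ defined from φ⁽¹⁾, φ⁽²⁾, φ⁽³⁾ as φ = φ⁽¹⁾+φ⁽²⁾+φ⁽³⁾, φ̄ = φ⁽¹⁾+ωφ⁽²⁾+ω*φ⁽³⁾, φ̄̄ = φ⁽¹⁾+ω²φ⁽²⁾+ω*²φ⁽³⁾ where φ⁽¹⁾ = λ^{n₃}∏ⱼ(aⱼ+λ)^{nⱼ}, φ⁽²⁾ = (ωλ)^{n₃}∏ⱼ(aⱼ+ωλ)^{nⱼ}, φ⁽³⁾ = (ω*λ)^{n₃}∏ⱼ(aⱼ+ω*λ)^{nⱼ}, the 3-periodic conditions hold: T₃(φ)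 = λφ̄, T₃²(φ) = λ²φ̄̄, and T₃³(φ) = λ³φ. -/
/-- The seed eigenfunctions satisfy the 3-periodic conditions
    T₃(φ) = λφ̄, T₃²(φ) = λ²φ̄̄, T₃³(φ) = λ³φ. -/
theorem stmt8 (a₁ a₂ l ω ωs : ℂ)
    (hω3 : ω^3 = 1) (hω1 : ω ≠ 1) (hωs : ωs = ω^2)
    (hl : l ≠ 0)
    (h1 : a₁ + l ≠ 0) (h2 : a₁ + ω * l ≠ 0) (h3 : a₁ + ωs * l ≠ 0)
    (h4 : a₂ + l ≠ 0) (h5 : a₂ + ω * l ≠ 0) (h6 : a₂ + ωs * l ≠ 0)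
    (φ1 φ2 φ3 φ φb φbb : ℤ → ℤ → ℤ → ℂ)
    (hφ1 : ∀ n₁ n₂ n₃, φ1 n₁ n₂ n₃ = l ^ n₃ * (a₁ + l) ^ n₁ * (a₂ + l) ^ n₂)
    (hφ2 : ∀ n₁ n₂ n₃, φ2 n₁ n₂ n₃ = (ω * l) ^ n₃ * (a₁ + ω * l) ^ n₁ * (a₂ + ω * l) ^ n₂)
    (hφ3 : ∀ n₁ n₂ n₃, φ3 n₁ n₂ n₃ = (ωs * l) ^ n₃ * (a₁ + ωs * l) ^ n₁ * (a₂ + ωs * l) ^ n₂)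
    (hφ : ∀ n₁ n₂ n₃, φ n₁ n₂ n₃ = φ1 n₁ n₂ n₃ + φ2 n₁ n₂ n₃ + φ3 n₁ n₂ n₃)
    (hφb : ∀ n₁ n₂ n₃, φb n₁ n₂ n₃ = φ1 n₁ n₂ n₃ + ω * φ2 n₁ n₂ n₃ + ωs * φ3 n₁ n₂ n₃)
    (hφbb : ∀ n₁ n₂ n₃, φbb n₁ n₂ n₃
      = φ1 n₁ n₂ n₃ + ω^2 * φ2 n₁ n₂ n₃ + ωs^2 * φ3 n₁ n₂ n₃) :
    (∀ n₁ n₂ n₃, φ n₁ n₂ (n₃+1) = l * φb n₁ n₂ n₃) ∧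
    (∀ n₁ n₂ n₃, φ n₁ n₂ (n₃+2) = l^2 * φbb n₁ n₂ n₃) ∧
    (∀ n₁ n₂ n₃, φ n₁ n₂ (n₃+3) = l^3 * φ n₁ n₂ n₃) := by
  have hω0 : ω ≠ 0 := by
    intro h; rw [h] at hω3; simp at hω3
  have hωl : ω * l ≠ 0 := mul_ne_zero hω0 hl
  have hωs0 : ωs ≠ 0 := by rw [hωs]; exact pow_ne_zero _ hω0
  have hωsl : ωs * l ≠ 0 := mul_ne_zero hωs0 hl
  have key : ∀ (k : ℕ) (n₁ n₂ n₃ : ℤ),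
      φ1 n₁ n₂ (n₃ + k) = l ^ k * φ1 n₁ n₂ n₃ ∧
      φ2 n₁ n₂ (n₃ + k) = (ω * l) ^ k * φ2 n₁ n₂ n₃ ∧
      φ3 n₁ n₂ (n₃ + k) = (ωs * l) ^ k * φ3 n₁ n₂ n₃ := by
    intro k n₁ n₂ n₃
    refine ⟨?_, ?_, ?_⟩ <;>
      simp only [hφ1, hφ2, hφ3, zpow_add₀ hl, zpow_add₀ hωl, zpow_add₀ hωsl,
        zpow_natCast] <;> ring
  refine ⟨fun n₁ n₂ n₃ => ?_, fun n₁ n₂ n₃ => ?_, fun n₁ n₂ n₃ => ?_⟩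
  · obtain ⟨e1, e2, e3⟩ := key 1 n₁ n₂ n₃
    have : n₃ + 1 = n₃ + (1 : ℕ) := by norm_num
    rw [hφ, this, e1, e2, e3, hφb]
    ring
  · obtain ⟨e1, e2, e3⟩ := key 2 n₁ n₂ n₃
    have : n₃ + 2 = n₃ + (2 : ℕ) := by norm_num
    rw [hφ, this, e1, e2, e3, hφbb]
    rw [hωs]
    ring
  · obtain ⟨e1, e2, e3⟩ := key 3 n₁ n₂ n₃
    have : n₃ + 3 = n₃ + (3 : ℕ) := by norm_num
    rw [hφ, this, e1, e2, e3, hφ]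
    have hωs3 : ωs ^ 3 = 1 := by rw [hωs, ← pow_mul, mul_comm, pow_mul, hω3, one_pow]
    rw [mul_pow, mul_pow, hω3, hωs3]
    ring
end

section
/- Let Ω be an N×N complex matrix, let a, c be column N-vectors, b, d row N-vectors, and α, β, γ, δ scalars. If the (N+1)×(N+1) bordered matrices are denoted [Ω a; b α] etc., then the Jacobi/Desnanot-type identity holds: det[Ω c; b γ]·det[Ω a; d β] − det[Ω a; b α]·det[Ω c; d δ] = −det(Ω)·det[Ω c a; d δ β; b γ α] (the (N+2)×(N+2) matrix with Ω bordered by columns c, a and rows (d, δ, β), (b, γ, α)). -/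
open Matrix Polynomial

def borderR {R : Type*} [CommRing R] {N : ℕ} (Ω : Matrix (Fin N) (Fin N) R) (a b : Fin N → R) (α : R) :
    Matrix (Fin N ⊕ Unit) (Fin N ⊕ Unit) R :=
  Matrix.fromBlocks Ω (fun i _ => a i) (fun _ j => b j) (fun _ _ => α)

def border2R {R : Type*} [CommRing R] {N : ℕ} (Ω : Matrix (Fin N) (Fin N) R) (c a d b : Fin N → R)
    (δ β γ α : R) : Matrix (Fin N ⊕ Fin 2) (Fin N ⊕ Fin 2) R :=
  Matrix.fromBlocks Ω (fun i j => ![c i, a i] j) (fun i j => ![d, b] i j) !![δ, β; γ, α]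

lemma borderR_det {R : Type*} [CommRing R] {N : ℕ} (Ω : Matrix (Fin N) (Fin N) R)
    [Invertible Ω] (a b : Fin N → R) (α : R) :
    (borderR Ω a b α).det = Ω.det * (α - ∑ j, (∑ i, b i * Ω⁻¹ i j) * a j) := by
  rw [borderR]; erw [det_fromBlocks₁₁ Ω (Matrix.of fun i (_ : Unit) => a i) (Matrix.of fun (_ : Unit) j => b j) (Matrix.of fun _ _ => α)]
  congr 1
  simp [det_unique, Matrix.mul_apply, Finset.sum_comm]

lemma border2R_det {R : Type*} [CommRing R] {N : ℕ} (Ω : Matrix (Fin N) (Fin N) R)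
    [Invertible Ω] (c a d b : Fin N → R) (δ β γ α : R) :
    (border2R Ω c a d b δ β γ α).det = Ω.det *
      ((δ - ∑ j, (∑ i, d i * Ω⁻¹ i j) * c j) * (α - ∑ j, (∑ i, b i * Ω⁻¹ i j) * a j)
       - (β - ∑ j, (∑ i, d i * Ω⁻¹ i j) * a j) * (γ - ∑ j, (∑ i, b i * Ω⁻¹ i j) * c j)) := by
  rw [border2R]; erw [det_fromBlocks₁₁ Ω (Matrix.of fun i j => ![c i, a i] j) (Matrix.of fun i j => ![d, b] i j) !![δ, β; γ, α]]
  congr 1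
  simp [det_fin_two, Matrix.mul_apply, Finset.sum_comm]

lemma keyR {R : Type*} [CommRing R] {N : ℕ} (Ω : Matrix (Fin N) (Fin N) R)
    (h : IsUnit Ω.det) (a c d b : Fin N → R) (α β γ δ : R) :
    (borderR Ω c b γ).det * (borderR Ω a d β).det
      - (borderR Ω a b α).det * (borderR Ω c d δ).det
      = -Ω.det * (border2R Ω c a d b δ β γ α).det := by
  have := Ω.invertibleOfIsUnitDet h
  rw [borderR_det, borderR_det, borderR_det, borderR_det, border2R_det]
  ring

lemma borderR_map {R S : Type*} [CommRing R] [CommRing S] (f : R →+* S) {N : ℕ}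
    (Ω : Matrix (Fin N) (Fin N) R) (a b : Fin N → R) (α : R) :
    (borderR Ω a b α).map f = borderR (Ω.map f) (f ∘ a) (f ∘ b) (f α) := by
  ext i j
  rcases i with i | i <;> rcases j with j | j <;>
    simp [borderR, Matrix.fromBlocks, Matrix.map_apply]

lemma border2R_map {R S : Type*} [CommRing R] [CommRing S] (f : R →+* S) {N : ℕ}
    (Ω : Matrix (Fin N) (Fin N) R) (c a d b : Fin N → R) (δ β γ α : R) :
    (border2R Ω c a d b δ β γ α).map f
      = border2R (Ω.map f) (f ∘ c) (f ∘ a) (f ∘ d) (f ∘ b) (f δ) (f β) (f γ) (f α) := by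
  ext i j
  rcases i with i | i <;> rcases j with j | j
  · simp [border2R, Matrix.fromBlocks, Matrix.map_apply]
  · fin_cases j <;> simp [border2R, Matrix.fromBlocks, Matrix.map_apply]
  · fin_cases i <;> simp [border2R, Matrix.fromBlocks, Matrix.map_apply]
  · fin_cases i <;> fin_cases j <;> simp [border2R, Matrix.fromBlocks, Matrix.map_apply]

theorem stmt13' (N : ℕ) (Ω : Matrix (Fin N) (Fin N) ℂ)
    (a c d b : Fin N → ℂ) (α β γ δ : ℂ) :
    (borderR Ω c b γ).det * (borderR Ω a d β).det
      - (borderR Ω a b α).det * (borderR Ω c d δ).det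
      = -Ω.det * (border2R Ω c a d b δ β γ α).det := by
  classical
  set ΩX : Matrix (Fin N) (Fin N) (Polynomial ℂ) :=
    (Polynomial.X : Polynomial ℂ) • 1 + Ω.map Polynomial.C with hΩX
  have hchar : ΩX.det = (-Ω).charpoly := by
    have hm : Matrix.charmatrix (-Ω) = ΩX := by
      ext i j
      by_cases h : i = j <;>
        simp [Matrix.charmatrix_apply_eq, Matrix.charmatrix_apply_ne, hΩX,
          Matrix.one_apply, h, Matrix.map_apply, Matrix.add_apply]
    rw [Matrix.charpoly, hm]
  -- evaluation of ΩX at t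
  have hevalΩ : ∀ t : ℂ, ΩX.map (Polynomial.evalRingHom t) = t • 1 + Ω := by
    intro t
    ext i j
    by_cases h : i = j <;>
      simp [hΩX, Matrix.map_apply, Matrix.one_apply, Matrix.add_apply, h]
  have hdet : ∀ t : ℂ, Polynomial.eval t ΩX.det = (t • 1 + Ω).det := by
    intro t
    have := RingHom.map_det (Polynomial.evalRingHom t) ΩX
    rw [← hevalΩ t]
    simpa [Matrix.map] using this
  set p : Polynomial ℂ :=
    (borderR ΩX (Polynomial.C ∘ c) (Polynomial.C ∘ b) (Polynomial.C γ)).det *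
      (borderR ΩX (Polynomial.C ∘ a) (Polynomial.C ∘ d) (Polynomial.C β)).det
    - (borderR ΩX (Polynomial.C ∘ a) (Polynomial.C ∘ b) (Polynomial.C α)).det *
      (borderR ΩX (Polynomial.C ∘ c) (Polynomial.C ∘ d) (Polynomial.C δ)).det
    + ΩX.det *
      (border2R ΩX (Polynomial.C ∘ c) (Polynomial.C ∘ a) (Polynomial.C ∘ d)
        (Polynomial.C ∘ b) (Polynomial.C δ) (Polynomial.C β) (Polynomial.C γ)
        (Polynomial.C α)).det with hp
  have hevalb : ∀ (t : ℂ) (u v : Fin N → ℂ) (x : ℂ),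
      Polynomial.eval t (borderR ΩX (Polynomial.C ∘ u) (Polynomial.C ∘ v) (Polynomial.C x)).det
        = (borderR (t • 1 + Ω) u v x).det := by
    intro t u v x
    have := RingHom.map_det (Polynomial.evalRingHom t)
      (borderR ΩX (Polynomial.C ∘ u) (Polynomial.C ∘ v) (Polynomial.C x))
    rw [RingHom.mapMatrix_apply, borderR_map, hevalΩ] at this
    simpa [Function.comp_def] using this
  have hevalb2 : ∀ t : ℂ,
      Polynomial.eval t (border2R ΩX (Polynomial.C ∘ c) (Polynomial.C ∘ a) (Polynomial.C ∘ d)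
        (Polynomial.C ∘ b) (Polynomial.C δ) (Polynomial.C β) (Polynomial.C γ)
        (Polynomial.C α)).det
        = (border2R (t • 1 + Ω) c a d b δ β γ α).det := by
    intro t
    have := RingHom.map_det (Polynomial.evalRingHom t)
      (border2R ΩX (Polynomial.C ∘ c) (Polynomial.C ∘ a) (Polynomial.C ∘ d)
        (Polynomial.C ∘ b) (Polynomial.C δ) (Polynomial.C β) (Polynomial.C γ) (Polynomial.C α))
    rw [RingHom.mapMatrix_apply, border2R_map, hevalΩ] at this
    simpa [Function.comp_def] using this
  have hroot : ∀ t : ℂ, Polynomial.eval t ΩX.det ≠ 0 → Polynomial.eval t p = 0 := by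
    intro t ht
    have hu : IsUnit (t • 1 + Ω).det := by
      rw [← hdet t] at *
      exact isUnit_iff_ne_zero.mpr ht
    have hk := keyR (t • 1 + Ω) hu a c d b α β γ δ
    simp only [hp, Polynomial.eval_add, Polynomial.eval_sub, Polynomial.eval_mul,
      hevalb, hevalb2, hdet]
    linear_combination hk
  have hfin : {t : ℂ | Polynomial.eval t ΩX.det = 0}.Finite := by
    have hne : ΩX.det ≠ 0 := by
      rw [hchar]; exact ((-Ω).charpoly_monic).ne_zero
    exact Polynomial.finite_setOf_isRoot hne
  have hinf : {t : ℂ | Polynomial.IsRoot p t}.Infinite := by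
    apply Set.Infinite.mono (s := {t : ℂ | Polynomial.eval t ΩX.det = 0}ᶜ)
    · intro t ht
      exact hroot t ht
    · exact hfin.infinite_compl
  have hp0 : p = 0 := Polynomial.eq_zero_of_infinite_isRoot p hinf
  have h0 := congrArg (Polynomial.eval 0) hp0
  simp only [hp, Polynomial.eval_add, Polynomial.eval_sub, Polynomial.eval_mul,
    hevalb, hevalb2, hdet, Polynomial.eval_zero] at h0
  simp only [zero_smul, zero_add] at h0
  linear_combination h0


/-- A bordered matrix: Ω with an extra column a, extra row b and corner α. -/
def border {N : ℕ} (Ω : Matrix (Fin N) (Fin N) ℂ) (a b : Fin N → ℂ) (α : ℂ) :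
    Matrix (Fin N ⊕ Unit) (Fin N ⊕ Unit) ℂ :=
  Matrix.fromBlocks Ω (fun i _ => a i) (fun _ j => b j) (fun _ _ => α)

/-- Ω bordered by two columns c, a and two rows (d, δ, β), (b, γ, α). -/
def border2 {N : ℕ} (Ω : Matrix (Fin N) (Fin N) ℂ) (c a d b : Fin N → ℂ)
    (δ β γ α : ℂ) : Matrix (Fin N ⊕ Fin 2) (Fin N ⊕ Fin 2) ℂ :=
  Matrix.fromBlocks Ω (fun i j => ![c i, a i] j) (fun i j => ![d, b] i j)
    !![δ, β; γ, α]

/-- The Jacobi/Desnanot-type determinant identity for bordered determinants. -/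
theorem stmt13 (N : ℕ) (Ω : Matrix (Fin N) (Fin N) ℂ)
    (a c d b : Fin N → ℂ) (α β γ δ : ℂ) :
    (border Ω c b γ).det * (border Ω a d β).det
      - (border Ω a b α).det * (border Ω c d δ).det
      = -Ω.det * (border2 Ω c a d b δ β γ α).det := by
  have h := stmt13' N Ω a c d b α β γ δ
  exact h
end

section
/- Suppose the scalar functions φ, φ̄, φ̄̄ on ℤ² satisfy, with nowhere-zero potentials v, w: φ₁ = a₁(w₁/w)φ + λφ̄, φ̄₁ = a₁(v₁/v)(w/w₁)φ̄ + λφ̄̄, φ̄̄₁ = a₁(v/v₁)φ̄̄ + λφ. Then φ satisfies the third-order scalar equation φ₁₁₁ − a₁·(v w₁₁ + v₁₁ w₁ + v₁ w₁₁₁)/(v₁ w₁₁)·φ₁₁ + a₁²·(v w₁₁ + v₁₁ w₁ + v₁ w)/(v₁ w₁)·φ₁ − a₁³φ = λ³φ. -/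
/-- The first-order 3×3 linear system implies the third-order scalar equation
    for φ in the n₁ direction. -/
theorem stmt17 (φ φb φbb v w : ℤ → ℤ → ℂ) (a₁ l : ℂ)
    (hv : ∀ m n, v m n ≠ 0) (hw : ∀ m n, w m n ≠ 0)
    (h1 : ∀ m n, φ (m+1) n = a₁ * (w (m+1) n / w m n) * φ m n + l * φb m n)
    (h2 : ∀ m n, φb (m+1) n
      = a₁ * (v (m+1) n / v m n) * (w m n / w (m+1) n) * φb m n + l * φbb m n)
    (h3 : ∀ m n, φbb (m+1) n = a₁ * (v m n / v (m+1) n) * φbb m n + l * φ m n) :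
    ∀ m n, φ (m+3) n
      - a₁ * ((v m n * w (m+2) n + v (m+2) n * w (m+1) n + v (m+1) n * w (m+3) n)
          / (v (m+1) n * w (m+2) n)) * φ (m+2) n
      + a₁^2 * ((v m n * w (m+2) n + v (m+2) n * w (m+1) n + v (m+1) n * w m n)
          / (v (m+1) n * w (m+1) n)) * φ (m+1) n
      - a₁^3 * φ m n
      = l^3 * φ m n := by
  intro m n
  have E1 : ∀ k : ℤ, φ (k+1) n * w k n
      = a₁ * w (k+1) n * φ k n + l * φb k n * w k n := by
    intro k; rw [h1 k n]; field_simp [hw k n]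
  have E2 : ∀ k : ℤ, φb (k+1) n * (v k n * w (k+1) n)
      = a₁ * v (k+1) n * w k n * φb k n + l * φbb k n * (v k n * w (k+1) n) := by
    intro k; rw [h2 k n]; field_simp [hv k n, hw (k+1) n]
  have E3 : φbb (m+1) n * v (m+1) n
      = a₁ * v m n * φbb m n + l * φ m n * v (m+1) n := by
    rw [h3 m n]; field_simp [hv (m+1) n]
  have key : φ (m+3) n * (v (m+1) n * w (m+1) n * w (m+2) n)
      - a₁ * ((v m n * w (m+2) n + v (m+2) n * w (m+1) n + v (m+1) n * w (m+3) n)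
          * w (m+1) n) * φ (m+2) n
      + a₁^2 * ((v m n * w (m+2) n + v (m+2) n * w (m+1) n + v (m+1) n * w m n)
          * w (m+2) n) * φ (m+1) n
      - a₁^3 * φ m n * (v (m+1) n * w (m+1) n * w (m+2) n)
      = l^3 * φ m n * (v (m+1) n * w (m+1) n * w (m+2) n) := by
    have hm2 : m + 2 = m + 1 + 1 := by ring
    have hm3 : m + 3 = m + 1 + 1 + 1 := by ring
    rw [hm2, hm3]
    linear_combination (l^2 * w (m+1) n * w (m+1+1) n) * E3
      + (l * w (m+1) n) * E2 (m+1)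
      + (-(a₁ * l * w (m+1+1) n)) * E2 m
      + (v (m+1) n * w (m+1) n) * E1 (m+1+1)
      + (-(a₁ * v (m+1+1) n * w (m+1) n + a₁ * v m n * w (m+1+1) n)) * E1 (m+1)
      + (a₁^2 * v (m+1) n * w (m+1+1) n) * E1 m
  have hV : v (m+1) n * w (m+1) n * w (m+2) n ≠ 0 := by
    exact mul_ne_zero (mul_ne_zero (hv _ _) (hw _ _)) (hw _ _)
  field_simp [hv (m+1) n, hw (m+1) n, hw (m+2) n]
  linear_combination key
end
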